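/- An element $\sum_{I\in\mathcal{I}_{\boldsymbol{\lambda}}} v_I\otimes p_I(z)$ of the weight subspace $\mathcal{V}_{\boldsymbol{\lambda}}\subset V^{\otimes n}\otimes\mathbb{C}[z_1,\dots,z_n]$ is $S_n$-antiinvariant if and only if there is a polynomial $g$, symmetric within each block of variables, such that $p_I(z)=g(z_{I_1},\dots,z_{I_N})\cdot D/R(I)$ for every $I\in\mathcal{I}_{\boldsymbol{\lambda}}$... equivalently, the map $g\mapsto \sum_I v_I\otimes g(z_{I_1},\dots,z_{I_N})\,D/R(I)$ is a $\mathbb{C}[z]^{S_n}$-module isomorphism from $\mathbb{C}[z_1,\dots,z_n]^{S_{\lambda_1}\times\cdots\times S_{\lambda_N}}$ onto $\mathcal{V}^-_{\boldsymbol{\lambda}}$. -/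

import Mathlib

open Finset MvPolynomial

/-- `R(I)` for the decomposition encoded by `f : Fin n → Fin N`. -/
noncomputable def Rpoly (N n : ℕ) (f : Fin n → Fin N) : MvPolynomial (Fin n) ℂ :=
  ∏ p ∈ univ.filter (fun p : Fin n × Fin n => f p.1 < f p.2), (X p.2 - X p.1)

/-- `D = ∏_{i<j} (z_j - z_i)`. -/
noncomputable def Dpoly (n : ℕ) : MvPolynomial (Fin n) ℂ :=
  ∏ p ∈ univ.filter (fun p : Fin n × Fin n => p.1 < p.2), (X p.2 - X p.1)


variable {n : ℕ} {M : Type*} [CommRing M]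

lemma pairProd_eq (g : Fin n × Fin n → M) :
    ∏ p ∈ univ.filter (fun p : Fin n × Fin n => p.1 < p.2), g p
      = ∏ i : Fin n, ∏ j ∈ Ioi i, g (i, j) := by
  rw [Finset.prod_sigma']
  refine Finset.prod_nbij' (fun p => ⟨p.1, p.2⟩) (fun x => (x.1, x.2)) ?_ ?_ ?_ ?_ ?_ <;>
    simp [Finset.mem_sigma, Finset.mem_Ioi]

lemma dpoly_eq : Dpoly n = Matrix.det (Matrix.vandermonde (X : Fin n → MvPolynomial (Fin n) ℂ)) := by
  rw [Matrix.det_vandermonde, Dpoly, pairProd_eq]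

lemma rename_dpoly (σ : Equiv.Perm (Fin n)) :
    rename σ (Dpoly n) = (Equiv.Perm.sign σ : ℤ) • Dpoly n := by
  have h1 : rename σ (Dpoly n)
      = Matrix.det (Matrix.vandermonde (fun i => (X (σ i) : MvPolynomial (Fin n) ℂ))) := by
    rw [Matrix.det_vandermonde, ← pairProd_eq (fun p : Fin n × Fin n => (X (σ p.2) - X (σ p.1) : MvPolynomial (Fin n) ℂ)), Dpoly, map_prod]
    simp
  have h2 : Matrix.vandermonde (fun i => (X (σ i) : MvPolynomial (Fin n) ℂ))
      = (Matrix.vandermonde (X : Fin n → MvPolynomial (Fin n) ℂ)).submatrix σ id := by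
    ext i j; simp [Matrix.vandermonde_apply]
  rw [h1, h2, Matrix.det_permute, ← dpoly_eq, zsmul_eq_mul]

lemma X_sub_X_ne_zero {a b : Fin n} (h : a ≠ b) :
    (X b - X a : MvPolynomial (Fin n) ℂ) ≠ 0 :=
  sub_ne_zero.2 fun he => h ((X_injective he).symm)

lemma rpoly_ne_zero {N : ℕ} (f : Fin n → Fin N) : Rpoly N n f ≠ 0 := by
  rw [Rpoly]
  refine Finset.prod_ne_zero_iff.2 fun p hp => ?_
  simp only [Finset.mem_filter] at hp
  exact X_sub_X_ne_zero fun he => absurd (he ▸ hp.2) (lt_irrefl _)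

lemma dpoly_ne_zero : Dpoly n ≠ 0 := by
  rw [Dpoly]
  refine Finset.prod_ne_zero_iff.2 fun p hp => ?_
  simp only [Finset.mem_filter] at hp
  exact X_sub_X_ne_zero (ne_of_lt hp.2)

lemma rename_rpoly {N : ℕ} (σ : Equiv.Perm (Fin n)) (f : Fin n → Fin N) :
    rename σ (Rpoly N n (f ∘ σ)) = Rpoly N n f := by
  rw [Rpoly, map_prod, Rpoly]
  refine Finset.prod_nbij' (fun p => (σ p.1, σ p.2)) (fun p => (σ⁻¹ p.1, σ⁻¹ p.2))
    ?_ ?_ ?_ ?_ ?_ <;> simp [Function.comp]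

noncomputable def ksub (a b : Fin n) : MvPolynomial (Fin n) ℂ →ₐ[ℂ] MvPolynomial (Fin n) ℂ :=
  aeval (Function.update X a (X b))

lemma ksub_X (a b i : Fin n) : ksub a b (X i) = if i = a then X b else X i := by
  rw [ksub, aeval_X, Function.update_apply]

lemma dvd_sub_ksub (a b : Fin n) (p : MvPolynomial (Fin n) ℂ) :
    (X b - X a) ∣ p - ksub a b p := by
  induction p using MvPolynomial.induction_on with
  | C c => simp [ksub]
  | add p q hp hq =>
    rw [map_add]
    convert dvd_add hp hq using 1; ring
  | mul_X p i hp =>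
    rw [map_mul, ksub_X]
    have he : p * X i - ksub a b p * (if i = a then X b else X i)
        = (p - ksub a b p) * X i
          + ksub a b p * (X i - if i = a then X b else X i) := by ring
    rw [he]
    refine dvd_add (hp.mul_right _) (Dvd.dvd.mul_left ?_ _)
    by_cases h : i = a
    · subst h; rw [if_pos rfl]; exact ⟨-1, by ring⟩
    · rw [if_neg h]; simp

lemma ksub_cancel {a b : Fin n} (h : a ≠ b) : ksub a b (X b - X a) = 0 := by
  rw [map_sub, ksub_X, ksub_X, if_neg (Ne.symm h), if_pos rfl, sub_self]

lemma prime_X_sub_X {a b : Fin n} (h : a ≠ b) :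
    Prime (X b - X a : MvPolynomial (Fin n) ℂ) := by
  refine ⟨X_sub_X_ne_zero h, ?_, ?_⟩
  · intro hu
    have := hu.map (ksub a b)
    rw [ksub_cancel h] at this
    exact not_isUnit_zero this
  · intro p q hpq
    obtain ⟨t, ht⟩ := hpq
    have h0 : ksub a b p * ksub a b q = 0 := by
      rw [← map_mul, ht, map_mul, ksub_cancel h, zero_mul]
    rcases mul_eq_zero.1 h0 with h' | h'
    · left; have hd := dvd_sub_ksub a b p; rwa [h', sub_zero] at hd
    · right; have hd := dvd_sub_ksub a b q; rwa [h', sub_zero] at hd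

lemma ksub_rename_swap (a b : Fin n) (p : MvPolynomial (Fin n) ℂ) :
    ksub a b (rename (Equiv.swap a b) p) = ksub a b p := by
  have : (ksub a b).comp (rename (Equiv.swap a b)) = ksub a b := by
    apply MvPolynomial.algHom_ext
    intro i
    simp only [AlgHom.comp_apply, rename_X, ksub_X]
    rcases eq_or_ne i a with hia | hia
    · rw [hia, Equiv.swap_apply_left, if_pos rfl]
      by_cases hba : b = a <;> simp [hba]
    · rcases eq_or_ne i b with hib | hib
      · rw [hib, Equiv.swap_apply_right]; simp
      · rw [Equiv.swap_apply_of_ne_of_ne hia hib, if_neg hia]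
  exact congrFun (congrArg DFunLike.coe this) p

lemma dvd_of_antiinv {a b : Fin n} (h : a ≠ b) {p : MvPolynomial (Fin n) ℂ}
    (hp : rename (Equiv.swap a b) p = -p) : (X b - X a) ∣ p := by
  have h1 : ksub a b p = - ksub a b p := by
    conv_lhs => rw [← ksub_rename_swap a b p, hp, map_neg]
  have h2 : ksub a b p = 0 := by
    have h3 : (2 : MvPolynomial (Fin n) ℂ) * ksub a b p = 0 := by linear_combination h1
    exact (mul_eq_zero.1 h3).resolve_left two_ne_zero
  have hd := dvd_sub_ksub a b p
  rwa [h2, sub_zero] at hd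

lemma myprod_dvd {ι : Type*} [DecidableEq ι] {R : Type*} [CommRing R] [IsDomain R]
    (s : Finset ι)
    (q : ι → R) (m : R) (hp : ∀ i ∈ s, Prime (q i)) (hd : ∀ i ∈ s, q i ∣ m)
    (hc : ∀ i ∈ s, ∀ j ∈ s, i ≠ j → ¬ q i ∣ q j) : (∏ i ∈ s, q i) ∣ m := by
  induction s using Finset.induction_on with
  | empty => simp
  | @insert a s ha ih =>
    rw [Finset.prod_insert ha]
    obtain ⟨t, ht⟩ := ih (fun i hi => hp i (Finset.mem_insert_of_mem hi))
      (fun i hi => hd i (Finset.mem_insert_of_mem hi))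
      (fun i hi j hj hij => hc i (Finset.mem_insert_of_mem hi) j
        (Finset.mem_insert_of_mem hj) hij)
    have hqa : q a ∣ (∏ i ∈ s, q i) * t := ht ▸ hd a (Finset.mem_insert_self a s)
    rcases (hp a (Finset.mem_insert_self a s)).2.2 _ _ hqa with h' | h'
    · exfalso
      obtain ⟨i, hi, hdvd⟩ :=
        ((hp a (Finset.mem_insert_self a s)).dvd_finset_prod_iff q).1 h'
      exact hc a (Finset.mem_insert_self a s) i (Finset.mem_insert_of_mem hi)
        (fun he => ha (he ▸ hi)) hdvd
    · obtain ⟨u, hu⟩ := h'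
      exact ⟨u, by rw [ht, hu]; ring⟩

lemma not_dvd_pairs {a b c d : Fin n} (hab : a < b) (hcd : c < d)
    (hne : (a, b) ≠ (c, d)) :
    ¬ (X b - X a : MvPolynomial (Fin n) ℂ) ∣ (X d - X c) := by
  intro hdvd
  obtain ⟨t, ht⟩ := hdvd
  have h0 : ksub a b (X d - X c) = 0 := by
    rw [ht, map_mul, ksub_cancel (ne_of_lt hab), zero_mul]
  rw [map_sub, ksub_X, ksub_X] at h0
  have h1 := sub_eq_zero.1 h0
  split_ifs at h1 with hda hca hca
  · exact (ne_of_lt hcd) (hca.trans hda.symm)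
  · have hbc := X_injective h1
    exact lt_irrefl a (lt_trans (hbc ▸ hab) (hda ▸ hcd))
  · exact hne (Prod.ext hca.symm (X_injective h1).symm)
  · exact (ne_of_lt hcd) (X_injective h1).symm

lemma rpoly_eq_unit_mul {N : ℕ} (f : Fin n → Fin N) :
    ∃ ε : ℂ, (ε = 1 ∨ ε = -1) ∧ Rpoly N n f = C ε *
      ∏ p ∈ univ.filter (fun p : Fin n × Fin n => p.1 < p.2 ∧ f p.1 ≠ f p.2),
        (X p.2 - X p.1) := by
  classical
  set S₁ := univ.filter (fun p : Fin n × Fin n => f p.1 < f p.2 ∧ p.1 < p.2) with hS₁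
  set S₂ := univ.filter (fun p : Fin n × Fin n => f p.1 < f p.2 ∧ ¬ p.1 < p.2) with hS₂
  set T := univ.filter (fun p : Fin n × Fin n => p.1 < p.2 ∧ f p.1 ≠ f p.2) with hT
  have hsplit : Rpoly N n f
      = (∏ p ∈ S₁, (X p.2 - X p.1)) * ∏ p ∈ S₂, (X p.2 - X p.1) := by
    rw [Rpoly, ← Finset.prod_filter_mul_prod_filter_not
      (univ.filter (fun p : Fin n × Fin n => f p.1 < f p.2))
      (fun p : Fin n × Fin n => p.1 < p.2), Finset.filter_filter, Finset.filter_filter]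
  have h2 : ∏ p ∈ S₂, ((X p.2 - X p.1) : MvPolynomial (Fin n) ℂ)
      = (-1 : ℂ) ^ S₂.card •
        ∏ p ∈ S₂.image Prod.swap, (X p.2 - X p.1) := by
    have e1 : ∀ p ∈ S₂, ((X p.2 - X p.1) : MvPolynomial (Fin n) ℂ)
        = (-1) * (X p.1 - X p.2) := fun p _ => by ring
    rw [Finset.prod_congr rfl e1, Finset.prod_mul_distrib, Finset.prod_const,
      Finset.prod_image (fun p _ q _ h => Prod.swap_injective h)]
    simp [smul_eq_C_mul, map_pow]
  have hdisj : Disjoint S₁ (S₂.image Prod.swap) := by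
    rw [Finset.disjoint_left]
    intro p hp hp'
    simp only [hS₁, Finset.mem_filter, Finset.mem_univ, true_and] at hp
    simp only [hS₂, Finset.mem_image, Finset.mem_filter, Finset.mem_univ, true_and] at hp'
    obtain ⟨q, ⟨hq1, hq2⟩, hqp⟩ := hp'
    rw [← hqp] at hp
    exact absurd (lt_trans hp.1 hq1) (lt_irrefl _)
  have hunion : T = S₁ ∪ S₂.image Prod.swap := by
    ext p
    simp only [hT, hS₁, hS₂, Finset.mem_union, Finset.mem_image, Finset.mem_filter,
      Finset.mem_univ, true_and]
    constructor
    · rintro ⟨hlt, hne⟩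
      rcases lt_or_gt_of_ne hne with h' | h'
      · exact Or.inl ⟨h', hlt⟩
      · exact Or.inr ⟨p.swap, ⟨h', not_lt_of_gt hlt⟩, Prod.swap_swap p⟩
    · rintro (⟨h1, h2⟩ | ⟨q, ⟨hq1, hq2⟩, hqp⟩)
      · exact ⟨h2, ne_of_lt h1⟩
      · rw [← hqp]
        refine ⟨?_, ne_of_gt hq1⟩
        rcases lt_trichotomy q.1 q.2 with h' | h' | h'
        · exact absurd h' hq2
        · exact absurd (h' ▸ hq1) (lt_irrefl _)
        · exact h'
  refine ⟨(-1 : ℂ) ^ S₂.card, neg_one_pow_eq_or ℂ _, ?_⟩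
  rw [hsplit, h2, hunion, Finset.prod_union hdisj, smul_eq_C_mul]
  ring

lemma dpoly_split {N : ℕ} (f : Fin n → Fin N) :
    Dpoly n = (∏ p ∈ univ.filter
        (fun p : Fin n × Fin n => p.1 < p.2 ∧ f p.1 = f p.2), (X p.2 - X p.1))
      * ∏ p ∈ univ.filter
        (fun p : Fin n × Fin n => p.1 < p.2 ∧ f p.1 ≠ f p.2), (X p.2 - X p.1) := by
  rw [Dpoly, ← Finset.prod_filter_mul_prod_filter_not
    (univ.filter (fun p : Fin n × Fin n => p.1 < p.2))
    (fun p : Fin n × Fin n => f p.1 = f p.2), Finset.filter_filter, Finset.filter_filter]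

lemma card_filter_comp {N : ℕ} (f : Fin n → Fin N) (σ : Equiv.Perm (Fin n)) (j : Fin N) :
    (univ.filter fun a => f (σ a) = j).card = (univ.filter fun a => f a = j).card := by
  apply Finset.card_bij' (fun a _ => σ a) (fun b _ => σ⁻¹ b) <;> simp

lemma qren {N : ℕ} (lam : Fin N → ℕ) (Q : (Fin n → Fin N) → MvPolynomial (Fin n) ℂ)
    (hQ : ∀ f : Fin n → Fin N, (∀ j, (univ.filter fun a => f a = j).card = lam j) →
      Rpoly N n f * Q f = Dpoly n)
    {f : Fin n → Fin N} (hf : ∀ j, (univ.filter fun a => f a = j).card = lam j)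
    (σ : Equiv.Perm (Fin n)) :
    rename σ (Q (f ∘ σ)) = (Equiv.Perm.sign σ : ℤ) • Q f := by
  have hfσ : ∀ j, (univ.filter fun a => (f ∘ σ) a = j).card = lam j := fun j =>
    (card_filter_comp f σ j).trans (hf j)
  have h2 := congrArg (rename (σ : Fin n → Fin n)) (hQ (f ∘ σ) hfσ)
  rw [map_mul, rename_rpoly, rename_dpoly, ← hQ f hf] at h2
  have h3 : Rpoly N n f * rename σ (Q (f ∘ σ))
      = Rpoly N n f * ((Equiv.Perm.sign σ : ℤ) • Q f) := by
    rw [h2, mul_smul_comm]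
  exact mul_left_cancel₀ (rpoly_ne_zero f) h3

/-- An element `∑_{I ∈ I_λ} v_I ⊗ p_I(z)` of the weight subspace `𝒱_λ` (encoded as
`x : (Fin n → Fin N) → ℂ[z]` supported on decompositions with fiber sizes `λ`) is
`S_n`-antiinvariant if and only if there is a polynomial `g`, symmetric within the
blocks of the reference decomposition `blk`, with `p_I = g(z_{I_1},…,z_{I_N})·D/R(I)`,
i.e. `x f = (rename τ g) · Q f` for any permutation `τ` matching `blk` with `f`, where
`Q f = D / R(I)` (specified by `R(I)·Q(I) = D`).  Equivalently,
`g ↦ ∑_I v_I ⊗ g(z_{I_1},…,z_{I_N}) D/R(I)` is a `ℂ[z]^{S_n}`-module isomorphism from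
the block-symmetric polynomials onto `𝒱⁻_λ`. -/
theorem stmt19 (N n : ℕ) (lam : Fin N → ℕ) (hsum : ∑ i, lam i = n)
    (blk : Fin n → Fin N)
    (hblk : ∀ j, (univ.filter fun a => blk a = j).card = lam j)
    (Q : (Fin n → Fin N) → MvPolynomial (Fin n) ℂ)
    (hQ : ∀ f : Fin n → Fin N, (∀ j, (univ.filter fun a => f a = j).card = lam j) →
      Rpoly N n f * Q f = Dpoly n)
    (x : (Fin n → Fin N) → MvPolynomial (Fin n) ℂ)
    (hsupp : ∀ f : Fin n → Fin N,
      ¬ (∀ j, (univ.filter fun a => f a = j).card = lam j) → x f = 0) :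
    (∀ σ : Equiv.Perm (Fin n),
        (fun f => rename σ (x (f ∘ σ))) = fun f => (Equiv.Perm.sign σ : ℤ) • x f) ↔
      ∃ g : MvPolynomial (Fin n) ℂ,
        (∀ σ : Equiv.Perm (Fin n), (∀ a, blk (σ a) = blk a) → rename σ g = g) ∧
        ∀ (f : Fin n → Fin N) (τ : Equiv.Perm (Fin n)),
          (∀ a, f (τ a) = blk a) → x f = rename τ g * Q f := by
  have hQblkne : Q blk ≠ 0 := fun h =>
    dpoly_ne_zero (by rw [← hQ blk hblk, h, mul_zero])
  have hsmul2 : ∀ (σ : Equiv.Perm (Fin n)) (y : MvPolynomial (Fin n) ℂ),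
      (Equiv.Perm.sign σ : ℤ) • (Equiv.Perm.sign σ : ℤ) • y = y := by
    intro σ y
    rw [smul_smul, ← Units.val_mul, ← pow_two, Int.units_sq, Units.val_one, one_smul]
  constructor
  · intro hanti
    -- the within-block product
    set P : Finset (Fin n × Fin n) :=
      univ.filter (fun p : Fin n × Fin n => p.1 < p.2 ∧ blk p.1 = blk p.2) with hP
    set W : MvPolynomial (Fin n) ℂ := ∏ p ∈ P, (X p.2 - X p.1) with hW
    obtain ⟨ε, hεpm, hR⟩ := rpoly_eq_unit_mul blk
    have hε2 : ε * ε = 1 := by rcases hεpm with h | h <;> rw [h] <;> ring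
    have hQblk : Q blk = C ε * W := by
      have hD := hQ blk hblk
      rw [hR, dpoly_split blk] at hD
      have hV : (∏ p ∈ univ.filter
          (fun p : Fin n × Fin n => p.1 < p.2 ∧ blk p.1 ≠ blk p.2),
            ((X p.2 - X p.1) : MvPolynomial (Fin n) ℂ)) ≠ 0 := by
        refine Finset.prod_ne_zero_iff.2 fun p hp => ?_
        simp only [Finset.mem_filter] at hp
        exact X_sub_X_ne_zero (ne_of_lt hp.2.1)
      have hD' : (C ε * Q blk) * (∏ p ∈ univ.filter
          (fun p : Fin n × Fin n => p.1 < p.2 ∧ blk p.1 ≠ blk p.2),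
            ((X p.2 - X p.1) : MvPolynomial (Fin n) ℂ))
          = W * (∏ p ∈ univ.filter
          (fun p : Fin n × Fin n => p.1 < p.2 ∧ blk p.1 ≠ blk p.2),
            ((X p.2 - X p.1) : MvPolynomial (Fin n) ℂ)) := by
        rw [← hD]; ring
      have hCQ := mul_right_cancel₀ hV hD'
      calc Q blk = C (ε * ε) * Q blk := by rw [hε2, map_one, one_mul]
        _ = C ε * (C ε * Q blk) := by rw [map_mul]; ring
        _ = C ε * W := by rw [hCQ]
    have hdvd : W ∣ x blk := by
      rw [hW]
      refine myprod_dvd P (fun p => (X p.2 - X p.1 : MvPolynomial (Fin n) ℂ)) (x blk)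
        ?_ ?_ ?_
      · intro p hp
        simp only [hP, Finset.mem_filter] at hp
        exact prime_X_sub_X (ne_of_lt hp.2.1)
      · intro p hp
        simp only [hP, Finset.mem_filter] at hp
        have hab : p.1 ≠ p.2 := ne_of_lt hp.2.1
        have hcomp : blk ∘ (Equiv.swap p.1 p.2) = blk := by
          funext c
          simp only [Function.comp]
          rcases eq_or_ne c p.1 with h | h1
          · rw [h, Equiv.swap_apply_left]; exact hp.2.2.symm
          · rcases eq_or_ne c p.2 with h | h2
            · rw [h, Equiv.swap_apply_right]; exact hp.2.2
            · rw [Equiv.swap_apply_of_ne_of_ne h1 h2]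
        have h1 := congrFun (hanti (Equiv.swap p.1 p.2)) blk
        rw [hcomp, Equiv.Perm.sign_swap hab] at h1
        have h1' : rename (Equiv.swap p.1 p.2) (x blk) = - x blk := by
          rw [h1]; simp
        exact dvd_of_antiinv hab h1'
      · intro p hp q hq hpq
        simp only [hP, Finset.mem_filter] at hp hq
        have := not_dvd_pairs hp.2.1 hq.2.1 (by
          intro h
          exact hpq (Prod.ext (congrArg Prod.fst h) (congrArg Prod.snd h)))
        simpa using this
    obtain ⟨t, ht⟩ := hdvd
    set g : MvPolynomial (Fin n) ℂ := C ε * t with hg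
    have hxg : x blk = g * Q blk := by
      rw [ht, hQblk, hg]
      calc W * t = C (ε * ε) * (W * t) := by rw [hε2, map_one, one_mul]
        _ = C ε * t * (C ε * W) := by rw [map_mul]; ring
    refine ⟨g, ?_, ?_⟩
    · intro σ hσ
      have hbσ : blk ∘ σ = blk := funext hσ
      have h1 := congrFun (hanti σ) blk
      rw [hbσ] at h1
      have h2 : rename (σ : Fin n → Fin n) (Q blk) = (Equiv.Perm.sign σ : ℤ) • Q blk := by
        have h3 := qren lam Q hQ hblk σ
        rwa [hbσ] at h3
      have h4 : rename (σ : Fin n → Fin n) (x blk)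
          = rename σ g * rename σ (Q blk) := by rw [hxg, map_mul]
      rw [h1, h2, hxg] at h4
      have h5 : (Equiv.Perm.sign σ : ℤ) • (g * Q blk)
          = (Equiv.Perm.sign σ : ℤ) • (rename σ g * Q blk) := by
        rw [h4, mul_smul_comm]
      have h6 : g * Q blk = rename σ g * Q blk := by
        have := congrArg (fun y => (Equiv.Perm.sign σ : ℤ) • y) h5
        simpa only [hsmul2] using this
      exact (mul_right_cancel₀ hQblkne h6).symm
    · intro f τ hfτ
      have hfc : ∀ j, (univ.filter fun a => f a = j).card = lam j := by
        intro j
        have hfe : f = fun a => blk (τ⁻¹ a) := by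
          funext a
          rw [← hfτ (τ⁻¹ a), Equiv.Perm.inv_def, Equiv.apply_symm_apply]
        rw [hfe]
        exact (card_filter_comp blk τ⁻¹ j).trans (hblk j)
      have hbτ : blk = f ∘ τ := funext fun a => (hfτ a).symm
      have h1 := congrFun (hanti τ) f
      rw [← hbτ] at h1
      have h2 : rename (τ : Fin n → Fin n) (Q blk) = (Equiv.Perm.sign τ : ℤ) • Q f := by
        have h3 := qren lam Q hQ hfc τ
        rwa [← hbτ] at h3
      calc x f = (Equiv.Perm.sign τ : ℤ) • (Equiv.Perm.sign τ : ℤ) • x f :=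
            (hsmul2 τ (x f)).symm
        _ = (Equiv.Perm.sign τ : ℤ) • rename τ (x blk) := by rw [h1]
        _ = (Equiv.Perm.sign τ : ℤ) • (rename τ g * rename τ (Q blk)) := by
            rw [hxg, map_mul]
        _ = (Equiv.Perm.sign τ : ℤ) • ((Equiv.Perm.sign τ : ℤ) •
              (rename τ g * Q f)) := by rw [h2, mul_smul_comm]
        _ = rename τ g * Q f := hsmul2 τ _
  · rintro ⟨g, hgsym, hx⟩ σ
    funext f
    by_cases hc : ∀ j, (univ.filter fun a => f a = j).card = lam j
    · -- construct τ with f (τ a) = blk a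
      have hcard : ∀ j, Fintype.card {a // blk a = j} = Fintype.card {a // f a = j} := by
        intro j
        rw [Fintype.card_subtype, Fintype.card_subtype, hblk j, hc j]
      let e : ∀ j, {a // blk a = j} ≃ {a // f a = j} := fun j =>
        Fintype.equivOfCardEq (hcard j)
      let τ : Equiv.Perm (Fin n) :=
        ((Equiv.sigmaFiberEquiv blk).symm.trans
          (Equiv.sigmaCongrRight e)).trans (Equiv.sigmaFiberEquiv f)
      have hτ : ∀ a, f (τ a) = blk a := by
        intro a
        show f ((Equiv.sigmaFiberEquiv f) ((Equiv.sigmaCongrRight e)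
          ((Equiv.sigmaFiberEquiv blk).symm a))) = blk a
        have h0 : (Equiv.sigmaFiberEquiv blk).symm a = ⟨blk a, ⟨a, rfl⟩⟩ := rfl
        rw [h0]
        exact (e (blk a) ⟨a, rfl⟩).2
      have hτ' : ∀ a, (f ∘ σ) ((τ.trans σ⁻¹) a) = blk a := by
        intro a
        simp only [Function.comp, Equiv.trans_apply, Equiv.Perm.inv_def, Equiv.apply_symm_apply]
        exact hτ a
      have hxf := hx f τ hτ
      have hxfσ := hx (f ∘ σ) (τ.trans σ⁻¹) hτ'
      have hfc2 : ∀ j, (univ.filter fun a => f a = j).card = lam j := hc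
      have hq := qren lam Q hQ hfc2 σ
      rw [hxfσ, map_mul, hq]
      have hcomp : rename (σ : Fin n → Fin n) (rename ((τ.trans σ⁻¹ : Equiv.Perm (Fin n)) :
          Fin n → Fin n) g) = rename (τ : Fin n → Fin n) g := by
        rw [rename_rename]
        have hfun : ((σ : Fin n → Fin n) ∘ ((τ.trans σ⁻¹ : Equiv.Perm (Fin n)) :
            Fin n → Fin n)) = (τ : Fin n → Fin n) := by
          funext a; simp
        rw [hfun]
      rw [hcomp, hxf, mul_smul_comm]
    · have hc' : ¬ ∀ j, (univ.filter fun a => (f ∘ σ) a = j).card = lam j := by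
        intro h
        apply hc
        intro j
        exact (card_filter_comp f σ j).symm.trans (h j)
      rw [hsupp f hc, hsupp (f ∘ σ) hc', map_zero, smul_zero]
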